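/- Suppose that zer A ≠ ∅, that for every k ∈ ℕ, ξ_k ≤ 1 and γ_k(β_k + γ_k) ≥ 0, and that ∑_k |α_k| < ∞, ∑_k |1 − β_k − γ_k| < ∞ and ∑_k ‖δ_k e_k‖ < ∞. Then: (1) ∑_{k=0}^{∞} γ_k(2β_k + γ_k)‖x_k − J_{c_k}(x_k)‖² < ∞; (2) if ∑_k γ_k(2β_k + γ_k) = ∞ and inf_{k∈ℕ} γ_k(2β_k + γ_k) ≥ 0, then liminf_{k→∞} ‖x_k − J_{c_k}(x_k)‖ = 0; (3) if liminf_{k→∞} γ_k(2β_k + γ_k) > 0, then x_k − J_{c_k}(x_k) → 0 strongly; (4) if liminf_{k→∞} γ_k(2β_k + γ_k) > 0 and (inf_{k∈ℕ} c_k > 0 or c_k → ∞), then Ω is nonempty and Ω ⊆ zer A. -/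

import Mathlib

set_option maxHeartbeats 1000000


open Filter InnerProductSpace

/-- `z` is a weak sequential cluster point of the sequence `y`: some subsequence of `y`
converges weakly to `z`. -/
def WSeqClusterPt {H : Type*} [NormedAddCommGroup H] [InnerProductSpace ℝ H]
    (y : ℕ → H) (z : H) : Prop :=
  ∃ φ : ℕ → ℕ, StrictMono φ ∧
    ∀ w : H, Tendsto (fun k => ⟪y (φ k), w⟫_ℝ) atTop (nhds ⟪z, w⟫_ℝ)

lemma exists_wseq {H : Type*} [NormedAddCommGroup H] [InnerProductSpace ℝ H] [CompleteSpace H]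
    (y : ℕ → H) (M : ℝ) (hM : ∀ k, ‖y k‖ ≤ M) : ∃ z, WSeqClusterPt y z := by
  have hM0 : 0 ≤ M := le_trans (norm_nonneg _) (hM 0)
  -- diagonal extraction
  set S : Set (ℕ → ℝ) := Set.univ.pi (fun _ => Set.Icc (-(M*M)) (M*M)) with hS
  have hScpt : IsCompact S := isCompact_univ_pi (fun _ => isCompact_Icc)
  have hmem : ∀ k, (fun j => ⟪y k, y j⟫_ℝ) ∈ S := by
    intro k
    refine Set.mem_univ_pi.2 fun j => ?_
    have := abs_real_inner_le_norm (y k) (y j)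
    have h2 : ‖y k‖ * ‖y j‖ ≤ M * M :=
      mul_le_mul (hM k) (hM j) (norm_nonneg _) hM0
    constructor <;> [linarith [abs_nonneg (⟪y k, y j⟫_ℝ), neg_abs_le (⟪y k, y j⟫_ℝ)];
      linarith [le_abs_self (⟪y k, y j⟫_ℝ)]
    ]
  obtain ⟨f, -, φ, hφ, hconv⟩ := hScpt.isSeqCompact hmem
  have hpt : ∀ j, Tendsto (fun k => ⟪y (φ k), y j⟫_ℝ) atTop (nhds (f j)) := by
    intro j
    exact tendsto_pi_nhds.1 hconv j
  -- the set of w for which the inner products converge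
  set W : Set H := {w | ∃ L : ℝ, Tendsto (fun k => ⟪y (φ k), w⟫_ℝ) atTop (nhds L)} with hW
  have hWy : ∀ j, y j ∈ W := fun j => ⟨f j, hpt j⟩
  have hWadd : ∀ w w', w ∈ W → w' ∈ W → w + w' ∈ W := by
    rintro w w' ⟨L, hL⟩ ⟨L', hL'⟩
    exact ⟨L + L', by simpa [inner_add_right] using hL.add hL'⟩
  have hWsmul : ∀ (a : ℝ) w, w ∈ W → a • w ∈ W := by
    rintro a w ⟨L, hL⟩
    exact ⟨a * L, by simpa [real_inner_smul_right] using hL.const_mul a⟩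
  have hW0 : (0 : H) ∈ W := ⟨0, by simpa using tendsto_const_nhds⟩
  -- W contains the closure of the span of the range of y
  have hWclos : ∀ w ∈ closure (Submodule.span ℝ (Set.range y) : Set H), w ∈ W := by
    intro w hw
    have hcauchy : CauchySeq (fun k => ⟪y (φ k), w⟫_ℝ) := by
      rw [Metric.cauchySeq_iff]
      intro ε hε
      obtain ⟨w', hw'mem, hw'close⟩ := Metric.mem_closure_iff.1 hw (ε / (3 * (M + 1)))
        (by positivity)
      have hw'W : w' ∈ W := by
        refine Submodule.span_induction ?_ hW0 (fun a b _ _ ha hb => hWadd a b ha hb)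
          (fun a b _ hb => hWsmul a b hb) hw'mem
        rintro _ ⟨j, rfl⟩; exact hWy j
      obtain ⟨L, hL⟩ := hw'W
      have hC : CauchySeq (fun k => ⟪y (φ k), w'⟫_ℝ) := hL.cauchySeq
      rw [Metric.cauchySeq_iff] at hC
      obtain ⟨N, hN⟩ := hC (ε / 3) (by positivity)
      refine ⟨N, fun m hm n hn => ?_⟩
      have hb : ∀ k, |⟪y (φ k), w⟫_ℝ - ⟪y (φ k), w'⟫_ℝ| ≤ M * (ε / (3 * (M + 1))) := by
        intro k
        rw [← inner_sub_right]
        refine le_trans (abs_real_inner_le_norm _ _) ?_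
        refine mul_le_mul (hM _) ?_ (norm_nonneg _) hM0
        rw [← dist_eq_norm] at *
        exact le_of_lt (by simpa [dist_comm] using hw'close)
      have hMe : M * (ε / (3 * (M + 1))) < ε / 3 := by
        rw [← mul_div_assoc, div_lt_div_iff₀ (by positivity) (by norm_num : (0:ℝ) < 3)]
        nlinarith
      have h1 := hb m
      have h2 := hb n
      have h3 := hN m hm n hn
      rw [Real.dist_eq] at *
      have : ⟪y (φ m), w⟫_ℝ - ⟪y (φ n), w⟫_ℝ =
          (⟪y (φ m), w⟫_ℝ - ⟪y (φ m), w'⟫_ℝ) + (⟪y (φ m), w'⟫_ℝ - ⟪y (φ n), w'⟫_ℝ)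
          + (⟪y (φ n), w'⟫_ℝ - ⟪y (φ n), w⟫_ℝ) := by ring
      rw [this]
      calc |_| ≤ |⟪y (φ m), w⟫_ℝ - ⟪y (φ m), w'⟫_ℝ| + |⟪y (φ m), w'⟫_ℝ - ⟪y (φ n), w'⟫_ℝ|
          + |⟪y (φ n), w'⟫_ℝ - ⟪y (φ n), w⟫_ℝ| := by
            exact le_trans (abs_add_le _ _) (by gcongr; exact abs_add_le _ _)
        _ < ε := by
            rw [abs_sub_comm (⟪y (φ n), w'⟫_ℝ) (⟪y (φ n), w⟫_ℝ)]
            linarith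
    exact cauchySeq_tendsto_of_complete hcauchy
  -- all of H via orthogonal decomposition
  set V : Submodule ℝ H := (Submodule.span ℝ (Set.range y)).topologicalClosure with hV
  haveI : CompleteSpace V := IsClosed.completeSpace_coe
    (hs := Submodule.isClosed_topologicalClosure _)
  have hWall : ∀ w : H, w ∈ W := by
    intro w
    have hproj : ((V.orthogonalProjectionOnto w : V) : H) ∈ W := by
      apply hWclos
      have := (V.orthogonalProjectionOnto w).2
      rw [← Submodule.topologicalClosure_coe]; exact this
    obtain ⟨L, hL⟩ := hproj
    refine ⟨L, ?_⟩
    have hzero : ∀ k, ⟪y (φ k), w - (V.orthogonalProjectionOnto w : V)⟫_ℝ = 0 := by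
      intro k
      have hv : y (φ k) ∈ V :=
        Submodule.le_topologicalClosure _ (Submodule.subset_span ⟨φ k, rfl⟩)
      have ho := Submodule.sub_starProjection_mem_orthogonal (K := V) w
      exact (Submodule.mem_orthogonal V _).1 ho _ hv
    have : ∀ k, ⟪y (φ k), w⟫_ℝ = ⟪y (φ k), ((V.orthogonalProjectionOnto w : V) : H)⟫_ℝ := by
      intro k
      have := hzero k
      rw [inner_sub_right] at this
      linarith
    simpa [this] using hL
  -- build the limit functional
  choose L hL using hWall
  have hLadd : ∀ w w', L (w + w') = L w + L w' := by
    intro w w'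
    have := (hL w).add (hL w')
    simp only [← inner_add_right] at this
    exact tendsto_nhds_unique (hL (w + w')) this
  have hLsmul : ∀ (a : ℝ) w, L (a • w) = a * L w := by
    intro a w
    have := (hL w).const_mul a
    simp only [← real_inner_smul_right] at this
    exact tendsto_nhds_unique (hL (a • w)) this
  have hLbound : ∀ w, |L w| ≤ M * ‖w‖ := by
    intro w
    have : Tendsto (fun k => |⟪y (φ k), w⟫_ℝ|) atTop (nhds |L w|) := (hL w).abs
    refine le_of_tendsto this (Eventually.of_forall fun k => ?_)
    exact le_trans (abs_real_inner_le_norm _ _)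
      (mul_le_mul_of_nonneg_right (hM _) (norm_nonneg w))
  let Llin : H →ₗ[ℝ] ℝ := { toFun := L, map_add' := hLadd, map_smul' := hLsmul }
  let Lc : H →L[ℝ] ℝ := LinearMap.mkContinuous Llin M (fun w => by
    simpa [Llin, Real.norm_eq_abs] using hLbound w)
  refine ⟨(InnerProductSpace.toDual ℝ H).symm Lc, φ, hφ, fun w => ?_⟩
  have : ⟪((InnerProductSpace.toDual ℝ H).symm Lc : H), w⟫_ℝ = Lc w := by
    simp [InnerProductSpace.toDual_symm_apply]
  rw [this]
  exact hL w

/-- Proposition 3.8: under `zer A ≠ ∅`, `ξ_k ≤ 1`, `γ_k(β_k+γ_k) ≥ 0`, and the summability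
conditions, (1) `∑ γ_k(2β_k+γ_k)‖x_k - J_{c_k}(x_k)‖² < ∞`; (2) if
`∑ γ_k(2β_k+γ_k) = ∞` and `inf γ_k(2β_k+γ_k) ≥ 0` then
`liminf ‖x_k - J_{c_k}(x_k)‖ = 0`; (3) if `liminf γ_k(2β_k+γ_k) > 0` then
`x_k - J_{c_k}(x_k) → 0`; (4) if moreover `inf c_k > 0` or `c_k → ∞`, the weak sequential
cluster points of `(x_k)` form a nonempty subset of `zer A`. -/
theorem stmt12 {H : Type*} [NormedAddCommGroup H] [InnerProductSpace ℝ H] [CompleteSpace H]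
    (A : H → Set H)
    (hmono : ∀ x y xu yv : H, xu ∈ A x → yv ∈ A y → 0 ≤ ⟪x - y, xu - yv⟫_ℝ)
    (hmax : ∀ x xu : H, (∀ y yv : H, yv ∈ A y → 0 ≤ ⟪x - y, xu - yv⟫_ℝ) → xu ∈ A x)
    (J : ℝ → H → H)
    (hJ : ∀ c : ℝ, 0 < c → ∀ x : H, (1 / c) • (x - J c x) ∈ A (J c x))
    (u : H) (e : ℕ → H) (c α β γ δ : ℕ → ℝ) (hc : ∀ k, 0 < c k)
    (x : ℕ → H)
    (hrec : ∀ k, x (k + 1) = α k • u + β k • x k + γ k • J (c k) (x k) + δ k • e k)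
    (ξ : ℕ → ℝ) (hξ : ∀ k, ξ k = |β k + γ k / 2| + |γ k / 2|)
    (hzer : ∃ p : H, (0 : H) ∈ A p)
    (hξ1 : ∀ k, ξ k ≤ 1)
    (hγβγ : ∀ k, 0 ≤ γ k * (β k + γ k))
    (hαsum : Summable (fun k => |α k|))
    (hβγsum : Summable (fun k => |1 - β k - γ k|))
    (hdesum : Summable (fun k => ‖δ k • e k‖)) :
    -- (1)
    BddAbove (Set.range fun n =>
      ∑ k ∈ Finset.range n, γ k * (2 * β k + γ k) * ‖x k - J (c k) (x k)‖ ^ 2) ∧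
    -- (2)
    ((Tendsto (fun n => ∑ k ∈ Finset.range n, γ k * (2 * β k + γ k)) atTop atTop ∧
        (∀ k, 0 ≤ γ k * (2 * β k + γ k))) →
      ∀ ε > (0 : ℝ), ∃ᶠ k in atTop, ‖x k - J (c k) (x k)‖ < ε) ∧
    -- (3)
    ((∃ r > (0 : ℝ), ∀ᶠ k in atTop, r ≤ γ k * (2 * β k + γ k)) →
      Tendsto (fun k => x k - J (c k) (x k)) atTop (nhds (0 : H))) ∧
    -- (4)
    (((∃ r > (0 : ℝ), ∀ᶠ k in atTop, r ≤ γ k * (2 * β k + γ k)) ∧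
        ((∃ ε > (0 : ℝ), ∀ k, ε ≤ c k) ∨ Tendsto c atTop atTop)) →
      (∃ z : H, WSeqClusterPt x z) ∧ ∀ z : H, WSeqClusterPt x z → (0 : H) ∈ A z) := by
  obtain ⟨p, hp⟩ := hzer
  set d : ℕ → H := fun k => x k - J (c k) (x k) with hd
  set s : ℕ → ℝ := fun k => γ k * (2 * β k + γ k) with hs
  -- key inner product inequality
  have hkey : ∀ k, ‖d k‖ ^ 2 ≤ ⟪x k - p, d k⟫_ℝ := by
    intro k
    have h := hJ (c k) (hc k) (x k)
    have h2 := hmono (J (c k) (x k)) p _ 0 h hp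
    rw [sub_zero, real_inner_smul_right] at h2
    have hpos : 0 < 1 / c k := div_pos one_pos (hc k)
    have h3 : 0 ≤ ⟪J (c k) (x k) - p, d k⟫_ℝ := nonneg_of_mul_nonneg_right h2 hpos
    have h4 : x k - p = d k + (J (c k) (x k) - p) := by simp [hd]
    rw [h4, inner_add_left, real_inner_self_eq_norm_sq]
    linarith
  -- norm of T x - p at most norm of x - p, via reflected resolvent
  have hq2d : ∀ k, ‖(x k - p) - (2 : ℝ) • d k‖ ≤ ‖x k - p‖ := by
    intro k
    have hsq : ‖(x k - p) - (2 : ℝ) • d k‖ ^ 2 ≤ ‖x k - p‖ ^ 2 := by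
      rw [norm_sub_sq_real, real_inner_smul_right, norm_smul]
      simp only [Real.norm_eq_abs]
      norm_num
      nlinarith [hkey k, norm_nonneg (d k)]
    have := Real.sqrt_le_sqrt hsq
    rwa [Real.sqrt_sq (norm_nonneg _), Real.sqrt_sq (norm_nonneg _)] at this
  -- main vector estimates
  have hm_le : ∀ k, ‖β k • (x k - p) + γ k • (J (c k) (x k) - p)‖ ≤ ‖x k - p‖ := by
    intro k
    have hrw : β k • (x k - p) + γ k • (J (c k) (x k) - p)
        = (β k + γ k / 2) • (x k - p) + (γ k / 2) • ((x k - p) - (2 : ℝ) • d k) := by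
      simp only [hd]; module
    rw [hrw]
    calc ‖(β k + γ k / 2) • (x k - p) + (γ k / 2) • ((x k - p) - (2 : ℝ) • d k)‖
        ≤ |β k + γ k / 2| * ‖x k - p‖ + |γ k / 2| * ‖(x k - p) - (2 : ℝ) • d k‖ := by
          refine le_trans (norm_add_le _ _) ?_
          rw [norm_smul, norm_smul, Real.norm_eq_abs, Real.norm_eq_abs]
      _ ≤ |β k + γ k / 2| * ‖x k - p‖ + |γ k / 2| * ‖x k - p‖ := by
          gcongr; exact hq2d k
      _ = ξ k * ‖x k - p‖ := by rw [hξ k]; ring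
      _ ≤ ‖x k - p‖ := by
          have := hξ1 k
          have h0 : 0 ≤ ‖x k - p‖ := norm_nonneg _
          nlinarith
  have hm_sq : ∀ k, ‖β k • (x k - p) + γ k • (J (c k) (x k) - p)‖ ^ 2
      ≤ ‖x k - p‖ ^ 2 - s k * ‖d k‖ ^ 2 := by
    intro k
    have hrw : β k • (x k - p) + γ k • (J (c k) (x k) - p)
        = (β k + γ k) • (x k - p) - γ k • d k := by
      simp only [hd]; module
    rw [hrw, norm_sub_sq_real, norm_smul, norm_smul, real_inner_smul_left,
      real_inner_smul_right, Real.norm_eq_abs, Real.norm_eq_abs]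
    have h1 := hkey k
    have h2 := hγβγ k
    have h3 : (β k + γ k) ^ 2 ≤ 1 := by
      have habs : |β k + γ k| ≤ ξ k := by
        rw [hξ k]
        calc |β k + γ k| = |(β k + γ k / 2) + γ k / 2| := by ring_nf
          _ ≤ |β k + γ k / 2| + |γ k / 2| := abs_add_le _ _
      have := hξ1 k
      have h4 : |β k + γ k| ≤ 1 := le_trans habs this
      nlinarith [abs_nonneg (β k + γ k), sq_abs (β k + γ k)]
    rw [mul_pow, mul_pow, sq_abs, sq_abs]
    simp only [hs]
    nlinarith [mul_nonneg h2 (sub_nonneg.2 h1), sq_nonneg ‖x k - p‖,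
      mul_nonneg (sub_nonneg.2 h3) (sq_nonneg ‖x k - p‖), sq_nonneg ‖d k‖]
  -- error terms
  set ε' : ℕ → ℝ := fun k => |α k| * ‖u‖ + |1 - β k - γ k| * ‖p‖ + ‖δ k • e k‖ with hε'
  have hε'nonneg : ∀ k, 0 ≤ ε' k := fun k => by positivity
  have hε'sum : Summable ε' :=
    ((hαsum.mul_right ‖u‖).add (hβγsum.mul_right ‖p‖)).add hdesum
  set E : ℝ := ∑' k, ε' k with hE
  have hE0 : 0 ≤ E := tsum_nonneg hε'nonneg
  have hε'leE : ∀ k, ε' k ≤ E := fun k => Summable.le_tsum hε'sum k (fun j _ => hε'nonneg j)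
  have hsumle : ∀ n, ∑ k ∈ Finset.range n, ε' k ≤ E := fun n =>
    Summable.sum_le_tsum _ (fun j _ => hε'nonneg j) hε'sum
  -- the recursion step
  have hstep : ∀ k, ‖x (k + 1) - p‖
      ≤ ‖β k • (x k - p) + γ k • (J (c k) (x k) - p)‖ + ε' k := by
    intro k
    have hrw : x (k + 1) - p = (β k • (x k - p) + γ k • (J (c k) (x k) - p))
        + (α k • u + (β k + γ k - 1) • p + δ k • e k) := by
      rw [hrec k]; module
    have hb : ‖α k • u + (β k + γ k - 1) • p + δ k • e k‖ ≤ ε' k := by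
      refine le_trans (norm_add_le _ _)
        (le_trans (add_le_add_left (norm_add_le _ _) _) ?_)
      rw [norm_smul, norm_smul, Real.norm_eq_abs, Real.norm_eq_abs,
        show β k + γ k - 1 = -(1 - β k - γ k) by ring, abs_neg]
    rw [hrw]
    exact le_trans (norm_add_le _ _) (add_le_add_right hb _)
  -- boundedness of the trajectory
  have hmono' : ∀ k, ‖x (k + 1) - p‖ ≤ ‖x k - p‖ + ε' k := fun k =>
    le_trans (hstep k) (add_le_add_left (hm_le k) _)
  have hbd : ∀ k, ‖x k - p‖ ≤ ‖x 0 - p‖ + E := by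
    have haux : ∀ k, ‖x k - p‖ ≤ ‖x 0 - p‖ + ∑ j ∈ Finset.range k, ε' j := by
      intro k; induction k with
      | zero => simp
      | succ k ih =>
        rw [Finset.sum_range_succ, ← add_assoc]
        linarith [hmono' k]
    intro k; exact le_trans (haux k) (by linarith [hsumle k])
  set M : ℝ := ‖x 0 - p‖ + E with hM
  have hM0 : 0 ≤ M := add_nonneg (norm_nonneg _) hE0
  set C : ℝ := 2 * M + E with hC
  have hC0 : 0 ≤ C := by rw [hC]; linarith
  -- per-step quantitative estimate
  have hperstep : ∀ k, s k * ‖d k‖ ^ 2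
      ≤ ‖x k - p‖ ^ 2 - ‖x (k + 1) - p‖ ^ 2 + C * ε' k := by
    intro k
    have h1 := hstep k
    have h2 := hm_sq k
    have h3 := hm_le k
    have h4 := hbd k
    have h5 := hε'leE k
    have h6 := hε'nonneg k
    have hsq : ‖x (k + 1) - p‖ ^ 2
        ≤ (‖β k • (x k - p) + γ k • (J (c k) (x k) - p)‖ + ε' k) ^ 2 :=
      pow_le_pow_left₀ (norm_nonneg _) h1 2
    have hmε : ‖β k • (x k - p) + γ k • (J (c k) (x k) - p)‖ * ε' k ≤ M * ε' k :=
      mul_le_mul_of_nonneg_right (h3.trans h4) h6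
    have hεε : ε' k * ε' k ≤ E * ε' k := mul_le_mul_of_nonneg_right h5 h6
    nlinarith [norm_nonneg (β k • (x k - p) + γ k • (J (c k) (x k) - p))]
  set B : ℝ := ‖x 0 - p‖ ^ 2 + C * E with hBdef
  have hB : ∀ n, ∑ k ∈ Finset.range n, s k * ‖d k‖ ^ 2 ≤ B := by
    intro n
    have htel : ∑ k ∈ Finset.range n, (‖x k - p‖ ^ 2 - ‖x (k + 1) - p‖ ^ 2)
        = ‖x 0 - p‖ ^ 2 - ‖x n - p‖ ^ 2 :=
      Finset.sum_range_sub' (fun k => ‖x k - p‖ ^ 2) n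
    calc ∑ k ∈ Finset.range n, s k * ‖d k‖ ^ 2
        ≤ ∑ k ∈ Finset.range n, (‖x k - p‖ ^ 2 - ‖x (k + 1) - p‖ ^ 2 + C * ε' k) :=
          Finset.sum_le_sum (fun k _ => hperstep k)
      _ = (‖x 0 - p‖ ^ 2 - ‖x n - p‖ ^ 2) + C * ∑ k ∈ Finset.range n, ε' k := by
          rw [Finset.sum_add_distrib, htel, Finset.mul_sum]
      _ ≤ B := by
          have h7 := hsumle n
          have h8 := mul_le_mul_of_nonneg_left h7 hC0
          rw [hBdef]
          nlinarith [sq_nonneg ‖x n - p‖]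
  -- part (3) as a reusable fact
  have key3 : (∃ r > (0 : ℝ), ∀ᶠ k in atTop, r ≤ s k) →
      Tendsto (fun k => d k) atTop (nhds (0 : H)) := by
    rintro ⟨r, hr, hev⟩
    obtain ⟨N, hN⟩ := eventually_atTop.1 hev
    have hnn : ∀ k, 0 ≤ s (N + k) * ‖d (N + k)‖ ^ 2 := fun k =>
      mul_nonneg (le_trans hr.le (hN _ (Nat.le_add_right N k))) (sq_nonneg _)
    have hsummable : Summable (fun k => s (N + k) * ‖d (N + k)‖ ^ 2) := by
      refine summable_of_sum_range_le hnn
        (c := B - ∑ k ∈ Finset.range N, s k * ‖d k‖ ^ 2) (fun n => ?_)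
      have hsplit := Finset.sum_range_add_sum_Ico (fun k => s k * ‖d k‖ ^ 2)
        (Nat.le_add_right N n)
      have heq : ∑ k ∈ Finset.Ico N (N + n), s k * ‖d k‖ ^ 2
          = ∑ k ∈ Finset.range n, s (N + k) * ‖d (N + k)‖ ^ 2 := by
        rw [Finset.sum_Ico_eq_sum_range]; simp
      have := hB (N + n)
      rw [← hsplit, heq] at this
      linarith
    have hterm := hsummable.tendsto_atTop_zero
    have hd2 : Tendsto (fun k => ‖d (N + k)‖ ^ 2) atTop (nhds 0) := by
      have hsq' : ∀ k, ‖d (N + k)‖ ^ 2 ≤ (s (N + k) * ‖d (N + k)‖ ^ 2) / r := by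
        intro k
        rw [le_div_iff₀ hr]
        have h9 := hN (N + k) (Nat.le_add_right N k)
        nlinarith [sq_nonneg ‖d (N + k)‖]
      have hdiv : Tendsto (fun k => (s (N + k) * ‖d (N + k)‖ ^ 2) / r) atTop (nhds 0) := by
        simpa using hterm.div_const r
      exact squeeze_zero (fun k => sq_nonneg _) hsq' hdiv
    have hdn : Tendsto (fun k => ‖d (N + k)‖) atTop (nhds 0) := by
      have hc2 := (Real.continuous_sqrt.tendsto 0).comp hd2
      rw [Real.sqrt_zero] at hc2
      exact hc2.congr fun k => Real.sqrt_sq (norm_nonneg _)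
    have hdall : Tendsto (fun k => ‖d k‖) atTop (nhds 0) := by
      rw [← tendsto_add_atTop_iff_nat N]
      simpa [Nat.add_comm] using hdn
    exact tendsto_zero_iff_norm_tendsto_zero.2 hdall
  refine ⟨⟨B, ?_⟩, ?_, key3, ?_⟩
  · rintro b ⟨n, rfl⟩
    exact hB n
  -- part (2)
  · rintro ⟨hdiv, hsnn⟩ ε hε
    by_contra hcon
    rw [Filter.not_frequently] at hcon
    obtain ⟨N, hN⟩ := eventually_atTop.1 hcon
    have hbound : ∀ n, ∑ k ∈ Finset.range n, s k
        ≤ ∑ k ∈ Finset.range N, s k + B / ε ^ 2 := by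
      intro n
      have hB0 : 0 ≤ B := le_trans (by simp) (hB 0)
      have hε2 : (0 : ℝ) < ε ^ 2 := by positivity
      rcases le_or_gt n N with h | h
      · have := Finset.sum_le_sum_of_subset_of_nonneg
          (Finset.range_subset_range.2 h) (fun k _ _ => hsnn k)
        have hd0 : 0 ≤ B / ε ^ 2 := div_nonneg hB0 hε2.le
        linarith
      · have hsplit := Finset.sum_range_add_sum_Ico s h.le
        have h1 : ε ^ 2 * ∑ k ∈ Finset.Ico N n, s k
            ≤ ∑ k ∈ Finset.Ico N n, s k * ‖d k‖ ^ 2 := by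
          rw [Finset.mul_sum]
          refine Finset.sum_le_sum fun k hk => ?_
          have hdk : ε ≤ ‖d k‖ := not_lt.1 (hN k (Finset.mem_Ico.1 hk).1)
          have h2 : ε ^ 2 ≤ ‖d k‖ ^ 2 := by nlinarith
          have hsk : 0 ≤ s k := hsnn k
          nlinarith [mul_le_mul_of_nonneg_left h2 hsk]
        have h2 : ∑ k ∈ Finset.Ico N n, s k * ‖d k‖ ^ 2 ≤ B := by
          refine le_trans (Finset.sum_le_sum_of_subset_of_nonneg ?_ ?_) (hB n)
          · intro k hk
            exact Finset.mem_range.2 (Finset.mem_Ico.1 hk).2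
          · intro k _ _
            exact mul_nonneg (hsnn k) (sq_nonneg _)
        have h3 : ∑ k ∈ Finset.Ico N n, s k ≤ B / ε ^ 2 := by
          rw [le_div_iff₀ hε2]
          nlinarith
        linarith [hsplit]
    obtain ⟨n, hn⟩ :=
      (hdiv.eventually_ge_atTop (∑ k ∈ Finset.range N, s k + B / ε ^ 2 + 1)).exists
    have := hbound n
    simp only [hs] at this hn ⊢
    linarith
  -- part (4)
  · rintro ⟨h3hyp, hcc⟩
    have hdten : Tendsto (fun k => d k) atTop (nhds (0 : H)) := key3 h3hyp
    have hdnorm : Tendsto (fun k => ‖d k‖) atTop (nhds 0) :=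
      tendsto_zero_iff_norm_tendsto_zero.1 hdten
    obtain ⟨ε0, hε0, N0, hN0⟩ : ∃ ε0 > (0 : ℝ), ∃ N0, ∀ k ≥ N0, ε0 ≤ c k := by
      rcases hcc with ⟨ε, hε, h⟩ | h
      · exact ⟨ε, hε, 0, fun k _ => h k⟩
      · exact ⟨1, one_pos, eventually_atTop.1 (h.eventually_ge_atTop 1)⟩
    have hxbdd : ∀ k, ‖x k‖ ≤ M + ‖p‖ := by
      intro k
      have h1 := hbd k
      have h2 : ‖x k‖ ≤ ‖x k - p‖ + ‖p‖ := by
        simpa using norm_add_le (x k - p) p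
      rw [hM]; linarith
    constructor
    · exact exists_wseq x (M + ‖p‖) hxbdd
    · rintro z ⟨φ, hφm, hφw⟩
      refine hmax z 0 (fun y yv hyv => ?_)
      set v : ℕ → H := fun k => (1 / c k) • d k with hv
      have hvA : ∀ k, v k ∈ A (J (c k) (x k)) := fun k => hJ (c k) (hc k) (x k)
      have hvten : Tendsto v atTop (nhds (0 : H)) := by
        apply squeeze_zero_norm' (a := fun k => ‖d k‖ / ε0)
        · refine eventually_atTop.2 ⟨N0, fun k hk => ?_⟩
          have hck := hN0 k hk
          have hle : (1 : ℝ) / c k ≤ 1 / ε0 := one_div_le_one_div_of_le hε0 hck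
          calc ‖v k‖ = (1 / c k) * ‖d k‖ := by
                rw [hv]; simp only [norm_smul, Real.norm_eq_abs]
                rw [abs_of_pos (div_pos one_pos (hc k))]
            _ ≤ (1 / ε0) * ‖d k‖ := mul_le_mul_of_nonneg_right hle (norm_nonneg _)
            _ = ‖d k‖ / ε0 := by ring
        · simpa using hdnorm.div_const ε0
      have hφtop : Tendsto φ atTop atTop := hφm.tendsto_atTop
      have hdφ : Tendsto (fun k => d (φ k)) atTop (nhds (0 : H)) := hdten.comp hφtop
      have hvφ : Tendsto (fun k => v (φ k)) atTop (nhds (0 : H)) := hvten.comp hφtop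
      have hF : ∀ k, 0 ≤ ⟪J (c (φ k)) (x (φ k)) - y, v (φ k) - yv⟫_ℝ := fun k =>
        hmono _ y _ yv (hvA (φ k)) hyv
      have hJeq : ∀ k, J (c k) (x k) = x k - d k := fun k => by simp [hd]
      have t1 : Tendsto (fun k => ⟪x (φ k), yv⟫_ℝ) atTop (nhds ⟪z, yv⟫_ℝ) := hφw yv
      have t2 : Tendsto (fun k => ⟪d (φ k), yv⟫_ℝ) atTop (nhds 0) := by
        refine squeeze_zero_norm (a := fun k => ‖d (φ k)‖ * ‖yv‖) (fun k => ?_) ?_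
        · rw [Real.norm_eq_abs]
          exact abs_real_inner_le_norm _ _
        · simpa using (tendsto_zero_iff_norm_tendsto_zero.1 hdφ).mul_const ‖yv‖
      have t3 : Tendsto (fun k => ⟪x (φ k) - d (φ k) - y, v (φ k)⟫_ℝ) atTop (nhds 0) := by
        apply squeeze_zero_norm' (a := fun k => (M + ‖p‖ + 1 + ‖y‖) * ‖v (φ k)‖)
        · have hev : ∀ᶠ k in atTop, ‖d (φ k)‖ < 1 :=
            (tendsto_zero_iff_norm_tendsto_zero.1 hdφ).eventually_lt_const one_pos
          filter_upwards [hev] with k hk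
          calc ‖⟪x (φ k) - d (φ k) - y, v (φ k)⟫_ℝ‖
              ≤ ‖x (φ k) - d (φ k) - y‖ * ‖v (φ k)‖ := by
                rw [Real.norm_eq_abs]
                exact abs_real_inner_le_norm _ _
            _ ≤ (M + ‖p‖ + 1 + ‖y‖) * ‖v (φ k)‖ := by
                refine mul_le_mul_of_nonneg_right ?_ (norm_nonneg _)
                calc ‖x (φ k) - d (φ k) - y‖ ≤ ‖x (φ k) - d (φ k)‖ + ‖y‖ :=
                      norm_sub_le _ _
                  _ ≤ ‖x (φ k)‖ + ‖d (φ k)‖ + ‖y‖ := by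
                      gcongr; exact norm_sub_le _ _
                  _ ≤ M + ‖p‖ + 1 + ‖y‖ := by
                      have := hxbdd (φ k); linarith
        · simpa using (tendsto_zero_iff_norm_tendsto_zero.1 hvφ).const_mul
            (M + ‖p‖ + 1 + ‖y‖)
      have hFten : Tendsto (fun k => ⟪x (φ k) - d (φ k) - y, v (φ k) - yv⟫_ℝ) atTop
          (nhds (0 - (⟪z, yv⟫_ℝ - 0 - ⟪y, yv⟫_ℝ))) := by
        have heq : ∀ k, ⟪x (φ k) - d (φ k) - y, v (φ k) - yv⟫_ℝ
            = ⟪x (φ k) - d (φ k) - y, v (φ k)⟫_ℝ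
              - (⟪x (φ k), yv⟫_ℝ - ⟪d (φ k), yv⟫_ℝ - ⟪y, yv⟫_ℝ) := by
          intro k
          simp only [inner_sub_right, inner_sub_left]
          try ring
        exact Tendsto.congr (fun k => (heq k).symm)
          (t3.sub ((t1.sub t2).sub tendsto_const_nhds))
      have hlim : 0 ≤ 0 - (⟪z, yv⟫_ℝ - 0 - ⟪y, yv⟫_ℝ) := by
        refine ge_of_tendsto hFten (Eventually.of_forall fun k => ?_)
        have h10 := hF k
        rwa [hJeq (φ k)] at h10
      have hfinal : ⟪z - y, (0 : H) - yv⟫_ℝ = 0 - (⟪z, yv⟫_ℝ - 0 - ⟪y, yv⟫_ℝ) := by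
        simp only [inner_sub_right, inner_sub_left, inner_zero_left, inner_zero_right]
        try ring
      rw [hfinal]
      exact hlim
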